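/- Let X be a finite partial order endowed with the upper-set (Alexandrov) topology, let C be a category with finite limits, and let F : X ⥤ C be a functor. Then the C-valued presheaf on the topological space X sending an open set U to the limit of F restricted to the (finite) subposet U, with restriction maps for V ⊆ U induced by the universal property of limits, is a sheaf. -/

import Mathlib

/-!
STATEMENT 1: For a finite partial order `X` with the upper-set (Alexandrov) topology, a
category `C` with finite limits, and a functor `F : X ⥤ C`, the presheaf sending an open
set `U` to the limit of `F` restricted to the subposet `U` (with the canonical restriction
maps) is a sheaf.
-/

open CategoryTheory CategoryTheory.Limits TopologicalSpace

universe u v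

variable (X : Type) [PartialOrder X] [Finite X]

/-- The upper-set (Alexandrov) topology on a poset: open sets are exactly the upper sets. -/
def upperSetTopology : TopologicalSpace X where
  IsOpen U := IsUpperSet U
  isOpen_univ := isUpperSet_univ
  isOpen_inter _ _ h h' := h.inter h'
  isOpen_sUnion _ h := isUpperSet_sUnion h

/-- The poset `X` with the upper-set topology, as an object of `TopCat`. -/
def XTop : TopCat := @TopCat.of X (upperSetTopology X)

/-- The subposet underlying an open subset of `X`. -/
def sub (U : Opens (XTop X)) : Type := {x : X // x ∈ U.1}

instance (U : Opens (XTop X)) : PartialOrder (sub X U) :=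
  inferInstanceAs (PartialOrder {x : X // x ∈ U.1})

noncomputable instance (U : Opens (XTop X)) : Fintype (sub X U) := by
  have : Finite (sub X U) := inferInstanceAs (Finite {x : X // x ∈ U.1})
  exact Fintype.ofFinite (sub X U)

noncomputable instance (U : Opens (XTop X)) (a b : sub X U) : Fintype (a ⟶ b) := by
  have : Subsingleton (a ⟶ b) := ⟨fun ⟨⟨h1⟩⟩ ⟨⟨h2⟩⟩ => rfl⟩
  have : Finite (a ⟶ b) := Finite.of_subsingleton
  exact Fintype.ofFinite _

noncomputable instance (U : Opens (XTop X)) : FinCategory (sub X U) where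
  fintypeObj := inferInstance
  fintypeHom := inferInstance

variable (C : Type u) [Category.{v} C] [HasFiniteLimits C] (F : X ⥤ C)

/-- The restriction of `F : X ⥤ C` to the (finite) subposet underlying an open set `U`. -/
def diag (U : Opens (XTop X)) : sub X U ⥤ C :=
  (Monotone.functor (f := (Subtype.val : sub X U → X)) fun _ _ h => h) ⋙ F

/-- The `C`-valued presheaf on `X` (with the upper-set topology) sending an open set `U`
to the limit of `F` restricted to the subposet `U`, with restriction maps for `V ⊆ U`
induced by the universal property of limits. -/
noncomputable def secPresheaf : TopCat.Presheaf C (XTop X) where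
  obj U := limit (diag X C F U.unop)
  map {U V} i :=
    limit.lift (diag X C F V.unop)
      { pt := limit (diag X C F U.unop)
        π :=
          { app := fun x => limit.π (diag X C F U.unop) ⟨x.1, leOfHom i.unop x.2⟩
            naturality := fun x y f => by
              dsimp
              refine (Category.id_comp _).trans ?_
              exact (limit.w (diag X C F U.unop) (homOfLE (leOfHom f))).symm } }
  map_id U := by
    apply limit.hom_ext
    intro j
    simp
    rfl
  map_comp {U V W} i j := by
    apply limit.hom_ext
    intro k
    simp
    try rfl
    first
      | exact (limit.lift_π (F := diag X C F V.unop) _ k).symm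
      | (erw [limit.lift_π]; try rfl)

/-- The presheaf of sections of a diagram `F : X ⥤ C` is a sheaf for the upper-set
topology on `X`. -/

lemma upper_mem (V : Opens (XTop X)) {a b : X} (h : a ≤ b) (ha : a ∈ V) : b ∈ V :=
  V.2 h ha

lemma secPresheaf_map_π {U V : (Opens (XTop X))ᵒᵖ} (i : U ⟶ V) (x : sub X V.unop) :
    (secPresheaf X C F).map i ≫ limit.π (diag X C F V.unop) x =
      limit.π (diag X C F U.unop) ⟨x.1, leOfHom i.unop x.2⟩ :=
  limit.lift_π _ _

lemma diag_map_eq (V W : Opens (XTop X)) {a b : X} (haV : a ∈ V) (hbV : b ∈ V)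
    (haW : a ∈ W) (hbW : b ∈ W)
    (f : (⟨a, haV⟩ : sub X V) ⟶ ⟨b, hbV⟩) (g : (⟨a, haW⟩ : sub X W) ⟶ ⟨b, hbW⟩) :
    (diag X C F V).map f = (diag X C F W).map g := by
  show F.map _ = F.map _
  congr 1

theorem secPresheaf_isSheaf : (secPresheaf X C F).IsSheaf := by
  rw [TopCat.Presheaf.isSheaf_iff_isSheafPairwiseIntersections]
  intro ι U
  have keyL : ∀ (s : Cone ((Pairwise.diagram U).op ⋙ secPresheaf X C F)) (i j : ι) (x : X)
      (hi : x ∈ U i) (hij : x ∈ U i ⊓ U j),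
      s.π.app (Opposite.op (Pairwise.single i)) ≫ limit.π (diag X C F (U i)) ⟨x, hi⟩ =
      s.π.app (Opposite.op (Pairwise.pair i j)) ≫ limit.π (diag X C F (U i ⊓ U j)) ⟨x, hij⟩ := by
    intro s i j x hi hij
    have wl := s.w (Quiver.Hom.op (X := Pairwise.pair i j) (Y := Pairwise.single i)
      (Pairwise.Hom.left i j))
    rw [← wl]
    erw [Category.assoc]
    congr 1
    exact (secPresheaf_map_π X C F (U := Opposite.op (U i)) (V := Opposite.op (U i ⊓ U j))
      ((homOfLE (inf_le_left : U i ⊓ U j ≤ U i)).op) ⟨x, hij⟩).symm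
  have keyR : ∀ (s : Cone ((Pairwise.diagram U).op ⋙ secPresheaf X C F)) (i j : ι) (x : X)
      (hj : x ∈ U j) (hij : x ∈ U i ⊓ U j),
      s.π.app (Opposite.op (Pairwise.single j)) ≫ limit.π (diag X C F (U j)) ⟨x, hj⟩ =
      s.π.app (Opposite.op (Pairwise.pair i j)) ≫ limit.π (diag X C F (U i ⊓ U j)) ⟨x, hij⟩ := by
    intro s i j x hj hij
    have wr := s.w (Quiver.Hom.op (X := Pairwise.pair i j) (Y := Pairwise.single j)
      (Pairwise.Hom.right i j))
    rw [← wr]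
    erw [Category.assoc]
    congr 1
    exact (secPresheaf_map_π X C F (U := Opposite.op (U j)) (V := Opposite.op (U i ⊓ U j))
      ((homOfLE (inf_le_right : U i ⊓ U j ≤ U j)).op) ⟨x, hij⟩).symm
  have key : ∀ (s : Cone ((Pairwise.diagram U).op ⋙ secPresheaf X C F)) (i j : ι) (x : X)
      (hi : x ∈ U i) (hj : x ∈ U j),
      s.π.app (Opposite.op (Pairwise.single i)) ≫ limit.π (diag X C F (U i)) ⟨x, hi⟩ =
      s.π.app (Opposite.op (Pairwise.single j)) ≫ limit.π (diag X C F (U j)) ⟨x, hj⟩ := by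
    intro s i j x hi hj
    rw [keyL s i j x hi ⟨hi, hj⟩, keyR s i j x hj ⟨hi, hj⟩]
  have hch : ∀ x : sub X (iSup U), ∃ i, x.1 ∈ U i := by
    intro x
    exact (Opens.mem_iSup (s := U) (x := show ↥(XTop X) from x.1)).mp x.2
  refine ⟨?_⟩
  refine
    { lift := fun s => limit.lift (diag X C F (iSup U))
        { pt := s.pt
          π :=
            { app := fun x => s.π.app (Opposite.op (Pairwise.single (hch x).choose)) ≫
                limit.π (diag X C F (U (hch x).choose)) ⟨x.1, (hch x).choose_spec⟩
              naturality := ?_ } }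
      fac := ?_
      uniq := ?_ }
  · intro x y f
    dsimp
    rw [Category.id_comp]
    erw [Category.assoc]
    have hy : y.1 ∈ U (hch x).choose :=
      upper_mem X (U (hch x).choose) (leOfHom f) (hch x).choose_spec
    have w := limit.w (diag X C F (U (hch x).choose))
      (homOfLE (leOfHom f) : (⟨x.1, (hch x).choose_spec⟩ : sub X (U (hch x).choose)) ⟶ ⟨y.1, hy⟩)
    have hmap : (diag X C F (U (hch x).choose)).map
        (homOfLE (leOfHom f) : (⟨x.1, (hch x).choose_spec⟩ : sub X (U (hch x).choose)) ⟶ ⟨y.1, hy⟩)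
        = (diag X C F (iSup U)).map f :=
      diag_map_eq X C F _ _ _ _ _ _ _ _
    rw [hmap] at w
    erw [w]
    exact key s (hch y).choose (hch x).choose y.1 (hch y).choose_spec hy
  · intro s j
    induction j using Opposite.rec with
    | op j =>
      apply limit.hom_ext
      intro x
      erw [Category.assoc]
      have hπ : ((secPresheaf X C F).mapCone (Pairwise.cocone U).op).π.app (Opposite.op j) ≫
          limit.π (diag X C F (Opposite.unop ((Pairwise.diagram U).op.obj (Opposite.op j)))) x =
          limit.π (diag X C F (iSup U))
            ⟨x.1, leOfHom ((Pairwise.cocone U).ι.app j) x.2⟩ :=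
        secPresheaf_map_π X C F ((Pairwise.cocone U).op.π.app (Opposite.op j)) x
      erw [hπ, limit.lift_π]
      dsimp
      cases j with
      | single i =>
        exact key s _ i x.1 _ x.2
      | pair i j =>
        have hx : x.1 ∈ U i := x.2.1
        have hxij : x.1 ∈ U i ⊓ U j := x.2
        exact (key s
          (hch ⟨x.1, leOfHom ((Pairwise.cocone U).ι.app (Pairwise.pair i j)) x.2⟩).choose i x.1
          (hch ⟨x.1, leOfHom ((Pairwise.cocone U).ι.app (Pairwise.pair i j)) x.2⟩).choose_spec
          hx).trans (keyL s i j x.1 hx hxij)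
  · intro s m hm
    refine limit.hom_ext (F := diag X C F (iSup U)) fun x => ?_
    rw [limit.lift_π]
    dsimp
    have hπ : ((secPresheaf X C F).mapCone (Pairwise.cocone U).op).π.app
          (Opposite.op (Pairwise.single (hch x).choose)) ≫
          limit.π (diag X C F (U (hch x).choose)) ⟨x.1, (hch x).choose_spec⟩ =
          limit.π (diag X C F (iSup U)) x :=
      secPresheaf_map_π X C F
        ((Pairwise.cocone U).op.π.app (Opposite.op (Pairwise.single (hch x).choose)))
        ⟨x.1, (hch x).choose_spec⟩
    rw [← hπ]
    erw [← Category.assoc, hm]
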